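/- If (P_t) is a stochastically monotone Feller Markov semigroup on ℝ, then its extension (P̃_t) to the extended real line ℝ̄, defined by P̃_t(x,·) being the extension of P_t(x,·) for x ∈ ℝ and P̃_t(±∞,·) = δ_{±∞}, is a Feller semigroup on the compact metric space ℝ̄. -/

import Mathlib

open MeasureTheory ProbabilityTheory ZeroAtInfty Filter Set Topology

namespace Stmt14Aux

/-- real-valued measure of a set -/
noncomputable def mR (μ : Measure ℝ) (s : Set ℝ) : ℝ := (μ s).toReal

lemma mR_nonneg (μ : Measure ℝ) (s : Set ℝ) : 0 ≤ mR μ s := ENNReal.toReal_nonneg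

lemma mR_mono (μ : Measure ℝ) [IsFiniteMeasure μ] {s t : Set ℝ} (h : s ⊆ t) :
    mR μ s ≤ mR μ t :=
  ENNReal.toReal_mono (measure_ne_top μ t) (measure_mono h)

lemma mR_union_le (μ : Measure ℝ) [IsFiniteMeasure μ] (s t : Set ℝ) :
    mR μ (s ∪ t) ≤ mR μ s + mR μ t := by
  unfold mR
  rw [← ENNReal.toReal_add (measure_ne_top μ s) (measure_ne_top μ t)]
  exact ENNReal.toReal_mono (by simp [ENNReal.add_ne_top, measure_ne_top]) (measure_union_le s t)

lemma mR_compl (μ : Measure ℝ) [IsProbabilityMeasure μ] {s : Set ℝ} (hs : MeasurableSet s) :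
    mR μ sᶜ = 1 - mR μ s := by
  unfold mR
  rw [measure_compl hs (measure_ne_top μ s), measure_univ,
    ENNReal.toReal_sub_of_le prob_le_one (by simp), ENNReal.toReal_one]

lemma integ {μ : Measure ℝ} [IsFiniteMeasure μ] {f : ℝ → ℝ} {M : ℝ}
    (hf : Measurable f) (hb : ∀ x, |f x| ≤ M) : Integrable f μ :=
  (integrable_const M).mono' hf.aestronglyMeasurable
    (ae_of_all _ (by simpa [Real.norm_eq_abs] using hb))

lemma int_indicator {μ : Measure ℝ} {s : Set ℝ} (hs : MeasurableSet s) :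
    ∫ y, s.indicator (fun _ => (1:ℝ)) y ∂μ = mR μ s :=
  integral_indicator_one hs

lemma indicator_bound {s : Set ℝ} (y : ℝ) : |s.indicator (fun _ => (1:ℝ)) y| ≤ 1 := by
  by_cases h : y ∈ s <;> simp [h]

/-- integral bounds for probability measures -/
lemma int_le_const {μ : Measure ℝ} [IsProbabilityMeasure μ] {f : ℝ → ℝ} {M c : ℝ}
    (hf : Measurable f) (hb : ∀ x, |f x| ≤ M) (hc : ∀ x, f x ≤ c) :
    ∫ y, f y ∂μ ≤ c := by
  calc ∫ y, f y ∂μ ≤ ∫ _, c ∂μ := integral_mono (integ hf hb) (integrable_const c) hc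
  _ = c := by simp

lemma const_le_int {μ : Measure ℝ} [IsProbabilityMeasure μ] {f : ℝ → ℝ} {M c : ℝ}
    (hf : Measurable f) (hb : ∀ x, |f x| ≤ M) (hc : ∀ x, c ≤ f x) :
    c ≤ ∫ y, f y ∂μ := by
  calc c = ∫ _, c ∂μ := by simp
  _ ≤ ∫ y, f y ∂μ := integral_mono (integrable_const c) (integ hf hb) hc

/-- If `|u - g| ≤ M·1ₛ` pointwise then the integrals differ by at most `M·μ(s)`. -/
lemma abs_integral_diff_le {μ : Measure ℝ} [IsProbabilityMeasure μ] {u g : ℝ → ℝ}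
    {Mu Mg M : ℝ} (hu : Measurable u) (hg : Measurable g)
    (hub : ∀ x, |u x| ≤ Mu) (hgb : ∀ x, |g x| ≤ Mg)
    {s : Set ℝ} (hs : MeasurableSet s) (hM : 0 ≤ M)
    (h : ∀ y, |u y - g y| ≤ M * s.indicator (fun _ => (1:ℝ)) y) :
    |∫ y, u y ∂μ - ∫ y, g y ∂μ| ≤ M * mR μ s := by
  rw [← integral_sub (integ hu hub) (integ hg hgb)]
  have h1 : |∫ y, (u y - g y) ∂μ| ≤ ∫ y, |u y - g y| ∂μ := by
    simpa [Real.norm_eq_abs] using norm_integral_le_integral_norm (μ := μ) (fun y => u y - g y)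
  have h2 : ∫ y, |u y - g y| ∂μ ≤ ∫ y, M * s.indicator (fun _ => (1:ℝ)) y ∂μ := by
    refine integral_mono ((integ hu hub).sub (integ hg hgb)).abs ?_ h
    exact integ ((measurable_const.indicator hs).const_mul M)
      (fun y => by
        rw [abs_mul]
        calc |M| * |s.indicator (fun _ => (1:ℝ)) y| ≤ |M| * 1 :=
          mul_le_mul_of_nonneg_left (indicator_bound y) (abs_nonneg M)
        _ = |M| := mul_one _)
  have h3 : ∫ y, M * s.indicator (fun _ => (1:ℝ)) y ∂μ = M * mR μ s := by
    rw [MeasureTheory.integral_const_mul, int_indicator hs]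
  linarith

section Rays

variable {P : ℝ → Kernel ℝ ℝ}

lemma mono_Ioi (hMarkov : ∀ t, 0 ≤ t → IsMarkovKernel (P t))
    (hmono : ∀ t, 0 ≤ t → ∀ f : ℝ → ℝ, Measurable f → Monotone f →
      (∃ M, ∀ x, |f x| ≤ M) → Monotone (fun x => ∫ y, f y ∂(P t x)))
    {t : ℝ} (ht : 0 ≤ t) (c : ℝ) :
    Monotone fun x => mR (P t x) (Ioi c) := by
  have h := hmono t ht ((Ioi c).indicator (fun _ => (1:ℝ)))
    (measurable_const.indicator measurableSet_Ioi)
    (fun a b hab => by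
      by_cases ha : c < a
      · simp [indicator, ha, lt_of_lt_of_le ha hab]
      · by_cases hb : c < b <;> simp [indicator, ha, hb])
    ⟨1, indicator_bound⟩
  convert h using 2 with x
  exact (int_indicator measurableSet_Ioi).symm

lemma anti_Iic (hMarkov : ∀ t, 0 ≤ t → IsMarkovKernel (P t))
    (hmono : ∀ t, 0 ≤ t → ∀ f : ℝ → ℝ, Measurable f → Monotone f →
      (∃ M, ∀ x, |f x| ≤ M) → Monotone (fun x => ∫ y, f y ∂(P t x)))
    {t : ℝ} (ht : 0 ≤ t) (c : ℝ) :
    Antitone fun x => mR (P t x) (Iic c) := by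
  intro a b hab
  haveI := hMarkov t ht
  have h1 : ∀ x : ℝ, mR (P t x) (Iic c) = 1 - mR (P t x) (Ioi c) := by
    intro x
    have : Iic c = (Ioi c)ᶜ := by simp
    rw [this, mR_compl _ measurableSet_Ioi]
  simp only [h1]
  have := mono_Ioi hMarkov hmono ht c hab
  linarith

/-- tails of a single probability measure vanish -/
lemma tail_Ioi (μ : Measure ℝ) [IsProbabilityMeasure μ] {ε : ℝ} (hε : 0 < ε) :
    ∃ K : ℝ, mR μ (Ioi K) ≤ ε := by
  have hm : Tendsto (fun n : ℕ => μ (Ioi (n : ℝ))) atTop (𝓝 (μ (⋂ n : ℕ, Ioi (n : ℝ)))) := by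
    refine tendsto_measure_iInter_atTop (fun n => measurableSet_Ioi.nullMeasurableSet)
      (fun m n hmn => Ioi_subset_Ioi (by exact_mod_cast hmn)) ⟨0, measure_ne_top μ _⟩
  have hempty : (⋂ n : ℕ, Ioi ((n : ℝ))) = ∅ := by
    ext x
    simp only [mem_iInter, mem_Ioi, mem_empty_iff_false, iff_false, not_forall, not_lt]
    obtain ⟨n, hn⟩ := exists_nat_gt x
    exact ⟨n, hn.le⟩
  rw [hempty, measure_empty] at hm
  have hm' : Tendsto (fun n : ℕ => mR μ (Ioi (n : ℝ))) atTop (𝓝 0) := by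
    have := (ENNReal.tendsto_toReal (by simp : (0:ENNReal) ≠ ⊤)).comp hm
    simpa [mR, Function.comp_def] using this
  obtain ⟨n, hn⟩ := (hm'.eventually (gt_mem_nhds hε)).exists
  exact ⟨n, hn.le⟩

lemma tail_Iic (μ : Measure ℝ) [IsProbabilityMeasure μ] {ε : ℝ} (hε : 0 < ε) :
    ∃ K : ℝ, mR μ (Iic K) ≤ ε := by
  have hm : Tendsto (fun n : ℕ => μ (Iic (-(n : ℝ)))) atTop (𝓝 (μ (⋂ n : ℕ, Iic (-(n : ℝ))))) := by
    refine tendsto_measure_iInter_atTop (fun n => measurableSet_Iic.nullMeasurableSet)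
      (fun m n hmn => Iic_subset_Iic.2 (by exact_mod_cast neg_le_neg (by exact_mod_cast hmn))) ⟨0, measure_ne_top μ _⟩
  have hempty : (⋂ n : ℕ, Iic (-(n : ℝ))) = ∅ := by
    ext x
    simp only [mem_iInter, mem_Iic, mem_empty_iff_false, iff_false, not_forall, not_le]
    obtain ⟨n, hn⟩ := exists_nat_gt (-x)
    exact ⟨n, by linarith⟩
  rw [hempty, measure_empty] at hm
  have hm' : Tendsto (fun n : ℕ => mR μ (Iic (-(n : ℝ)))) atTop (𝓝 0) := by
    have := (ENNReal.tendsto_toReal (by simp : (0:ENNReal) ≠ ⊤)).comp hm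
    simpa [mR, Function.comp_def] using this
  obtain ⟨n, hn⟩ := (hm'.eventually (gt_mem_nhds hε)).exists
  exact ⟨-(n:ℝ), hn.le⟩

end Rays

section Bump

/-- continuous bump: `1` on `[a,b]`, `0` outside `[a-1,b+1]`, values in `[0,1]` -/
noncomputable def bumpFun (a b : ℝ) : ℝ → ℝ :=
  fun x => max 0 (min 1 (min (x - (a - 1)) (b + 1 - x)))

lemma bumpFun_continuous (a b : ℝ) : Continuous (bumpFun a b) := by
  unfold bumpFun
  fun_prop

lemma bumpFun_nonneg (a b x : ℝ) : 0 ≤ bumpFun a b x := le_max_left _ _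

lemma bumpFun_le_one (a b x : ℝ) : bumpFun a b x ≤ 1 :=
  max_le zero_le_one (min_le_left _ _)

lemma bumpFun_abs_le_one (a b x : ℝ) : |bumpFun a b x| ≤ 1 :=
  abs_le.2 ⟨by linarith [bumpFun_nonneg a b x], bumpFun_le_one a b x⟩

lemma bumpFun_eq_one {a b x : ℝ} (h1 : a ≤ x) (h2 : x ≤ b) : bumpFun a b x = 1 := by
  unfold bumpFun
  rw [min_eq_left (le_min (by linarith) (by linarith)), max_eq_right zero_le_one]

lemma bumpFun_eq_zero {a b x : ℝ} (h : x ∉ Icc (a - 1) (b + 1)) : bumpFun a b x = 0 := by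
  unfold bumpFun
  rw [mem_Icc, not_and_or, not_le, not_le] at h
  rcases h with h | h
  · rw [max_eq_left]
    exact le_trans (min_le_right _ _) (min_le_left _ _) |>.trans (by linarith)
  · rw [max_eq_left]
    exact le_trans (min_le_right _ _) (min_le_right _ _) |>.trans (by linarith)

noncomputable def bump (a b : ℝ) : C₀(ℝ, ℝ) where
  toFun := bumpFun a b
  continuous_toFun := bumpFun_continuous a b
  zero_at_infty' := by
    have hev : ∀ᶠ x in cocompact ℝ, bumpFun a b x = 0 := by
      rw [Filter.hasBasis_cocompact.eventually_iff]
      exact ⟨Icc (a - 1) (b + 1), isCompact_Icc, fun x hx => bumpFun_eq_zero hx⟩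
    exact Tendsto.congr' (by filter_upwards [hev] with x hx using hx.symm) tendsto_const_nhds

@[simp] lemma bump_apply (a b x : ℝ) : bump a b x = bumpFun a b x := rfl

/-- product of a bounded continuous function with a bump, as a `C₀` function -/
noncomputable def cutMul (u : ℝ → ℝ) (hu : Continuous u) (a b : ℝ) : C₀(ℝ, ℝ) where
  toFun := fun x => u x * bumpFun a b x
  continuous_toFun := hu.mul (bumpFun_continuous a b)
  zero_at_infty' := by
    have hev : ∀ᶠ x in cocompact ℝ, u x * bumpFun a b x = 0 := by
      rw [Filter.hasBasis_cocompact.eventually_iff]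
      exact ⟨Icc (a - 1) (b + 1), isCompact_Icc, fun x hx => by rw [bumpFun_eq_zero hx, mul_zero]⟩
    exact Tendsto.congr' (by filter_upwards [hev] with x hx using hx.symm) tendsto_const_nhds

@[simp] lemma cutMul_apply (u : ℝ → ℝ) (hu : Continuous u) (a b x : ℝ) :
    cutMul u hu a b x = u x * bumpFun a b x := rfl

end Bump

section Escape

variable {P : ℝ → Kernel ℝ ℝ}

/-- for small times, mass does not escape a slightly larger interval -/
lemma small_escape (hMarkov : ∀ t, 0 ≤ t → IsMarkovKernel (P t))
    (hFellerB : ∀ f : C₀(ℝ, ℝ), ∀ ε > (0:ℝ), ∃ δ > (0:ℝ), ∀ t, 0 < t → t < δ →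
      ∀ x : ℝ, |(∫ y, f y ∂(P t x)) - f x| ≤ ε)
    (a b : ℝ) {ε : ℝ} (hε : 0 < ε) :
    ∃ δ > (0:ℝ), ∀ t, 0 < t → t < δ → ∀ x ∈ Icc a b,
      mR (P t x) ((Icc (a - 1) (b + 1))ᶜ) ≤ ε := by
  obtain ⟨δ, hδ, H⟩ := hFellerB (bump a b) ε hε
  refine ⟨δ, hδ, fun t ht htδ x hx => ?_⟩
  haveI := hMarkov t ht.le
  have h1 : mR (P t x) ((Icc (a - 1) (b + 1))ᶜ) ≤ ∫ y, (1 - bumpFun a b y) ∂(P t x) := by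
    rw [← int_indicator measurableSet_Icc.compl]
    refine integral_mono (integ (M := 1) (measurable_const.indicator measurableSet_Icc.compl)
      indicator_bound) (integ (M := 1) (measurable_const.sub (bumpFun_continuous a b).measurable) (fun y => abs_le.2
        ⟨by simp only [neg_le_sub_iff_le_add]; linarith [bumpFun_le_one a b y], by linarith [bumpFun_nonneg a b y]⟩)) ?_
    intro y
    by_cases hy : y ∈ Icc (a - 1) (b + 1)
    · simp [hy, indicator, bumpFun_le_one a b y]
    · simp [hy, indicator, bumpFun_eq_zero hy]
  have h2 : ∫ y, (1 - bumpFun a b y) ∂(P t x) = 1 - ∫ y, bumpFun a b y ∂(P t x) := by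
    rw [integral_sub (integrable_const 1) (integ (bumpFun_continuous a b).measurable
      (bumpFun_abs_le_one a b))]
    simp
  have h3 := H t ht htδ x
  have hbx : bump a b x = 1 := bumpFun_eq_one hx.1 hx.2
  rw [hbx] at h3
  have h4 : (1:ℝ) - ε ≤ ∫ y, bumpFun a b y ∂(P t x) := by
    have := abs_le.1 h3
    have heq : ∫ y, (bump a b) y ∂(P t x) = ∫ y, bumpFun a b y ∂(P t x) := rfl
    linarith [this.1, heq ▸ this.1]
  linarith

end Escape

section Arctan

variable {P : ℝ → Kernel ℝ ℝ}

lemma arctan_abs_le (y : ℝ) : |Real.arctan y| ≤ Real.pi / 2 :=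
  abs_le.2 ⟨(Real.neg_pi_div_two_lt_arctan y).le, (Real.arctan_lt_pi_div_two y).le⟩

/-- the key uniform small-time estimate for `arctan` -/
lemma arctan_unif (hMarkov : ∀ t, 0 ≤ t → IsMarkovKernel (P t))
    (hFellerB : ∀ f : C₀(ℝ, ℝ), ∀ ε > (0:ℝ), ∃ δ > (0:ℝ), ∀ t, 0 < t → t < δ →
      ∀ x : ℝ, |(∫ y, f y ∂(P t x)) - f x| ≤ ε)
    (hmono : ∀ t, 0 ≤ t → ∀ f : ℝ → ℝ, Measurable f → Monotone f →
      (∃ M, ∀ x, |f x| ≤ M) → Monotone (fun x => ∫ y, f y ∂(P t x)))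
    {ε : ℝ} (hε : 0 < ε) :
    ∃ δ > (0:ℝ), ∀ t, 0 < t → t < δ → ∀ x : ℝ,
      |(∫ y, Real.arctan y ∂(P t x)) - Real.arctan x| ≤ ε := by
  have hπ4 : Real.pi ≤ 4 := Real.pi_le_four
  have hπpos : 0 < Real.pi := Real.pi_pos
  have htop : Tendsto Real.arctan atTop (𝓝 (Real.pi / 2)) :=
    Real.tendsto_arctan_atTop.mono_right nhdsWithin_le_nhds
  have hbot : Tendsto Real.arctan atBot (𝓝 (-(Real.pi / 2))) :=
    Real.tendsto_arctan_atBot.mono_right nhdsWithin_le_nhds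
  obtain ⟨R₁, hR₁⟩ := eventually_atTop.1
    (htop.eventually (lt_mem_nhds (show Real.pi / 2 - ε / 4 < Real.pi / 2 by linarith)))
  obtain ⟨R₂, hR₂⟩ := eventually_atBot.1
    (hbot.eventually (gt_mem_nhds (show -(Real.pi / 2) < -(Real.pi / 2) + ε / 4 by linarith)))
  set R : ℝ := max 0 (max R₁ (-R₂)) with hRdef
  have hR0 : (0:ℝ) ≤ R := le_max_left _ _
  have hRR₁ : R₁ ≤ R := le_trans (le_max_left _ _) (le_max_right _ _)
  have hRR₂ : -R ≤ R₂ := by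
    have : -R₂ ≤ R := le_trans (le_max_right _ _) (le_max_right _ _)
    linarith
  set g₁ : C₀(ℝ, ℝ) := cutMul Real.arctan Real.continuous_arctan (-R - 1) (R + 1) with hg₁def
  obtain ⟨δ₁, hδ₁, H₁⟩ := hFellerB g₁ (ε / 4) (by linarith)
  obtain ⟨δ₂, hδ₂, H₂⟩ := small_escape hMarkov hFellerB (-R) R (show (0:ℝ) < ε / 8 by linarith)
  refine ⟨min δ₁ δ₂, lt_min hδ₁ hδ₂, fun t ht htδ x => ?_⟩
  haveI := hMarkov t ht.le
  have harc_meas : Measurable Real.arctan := Real.continuous_arctan.measurable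
  set F : ℝ → ℝ := fun z => ∫ y, Real.arctan y ∂(P t z) with hFdef
  have hFmono : Monotone F :=
    hmono t ht.le Real.arctan harc_meas Real.arctan_strictMono.monotone ⟨Real.pi / 2, arctan_abs_le⟩
  have hFle : ∀ z, F z ≤ Real.pi / 2 := fun z =>
    int_le_const harc_meas arctan_abs_le (fun y => (Real.arctan_lt_pi_div_two y).le)
  have hFge : ∀ z, -(Real.pi / 2) ≤ F z := fun z =>
    const_le_int harc_meas arctan_abs_le (fun y => (Real.neg_pi_div_two_lt_arctan y).le)
  have hinner : ∀ z ∈ Icc (-R) R, |F z - Real.arctan z| ≤ ε / 2 := by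
    intro z hz
    haveI := hMarkov t ht.le
    have hesc := H₂ t ht (lt_of_lt_of_le htδ (min_le_right _ _)) z hz
    have hg₁b : ∀ y, |g₁ y| ≤ Real.pi / 2 := by
      intro y
      rw [hg₁def, cutMul_apply, abs_mul]
      calc |Real.arctan y| * |bumpFun (-R - 1) (R + 1) y| ≤ (Real.pi / 2) * 1 :=
        mul_le_mul (arctan_abs_le y) (bumpFun_abs_le_one _ _ y) (abs_nonneg _) (by linarith)
      _ = Real.pi / 2 := mul_one _
    have hdiff : |F z - ∫ y, Real.arctan y * bumpFun (-R - 1) (R + 1) y ∂(P t z)| ≤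
        (Real.pi / 2) * mR (P t z) ((Icc (-R - 1) (R + 1))ᶜ) := by
      refine abs_integral_diff_le harc_meas
        (Real.continuous_arctan.mul (bumpFun_continuous _ _)).measurable
        arctan_abs_le (Mg := Real.pi / 2) (fun y => hg₁b y) measurableSet_Icc.compl (by linarith) ?_
      intro y
      by_cases hy : y ∈ Icc (-R - 1) (R + 1)
      · have h0 : bumpFun (-R - 1) (R + 1) y = 1 := bumpFun_eq_one hy.1 hy.2
        have h1 : (Icc (-R - 1) (R + 1))ᶜ.indicator (fun _ => (1:ℝ)) y = 0 :=
          indicator_of_notMem (by simpa using hy) _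
        rw [Pi.mul_apply, h0, mul_one, sub_self, abs_zero, h1, mul_zero]
      · have h1 : (Icc (-R - 1) (R + 1))ᶜ.indicator (fun _ => (1:ℝ)) y = 1 :=
          indicator_of_mem (by simpa using hy) _
        rw [Pi.mul_apply, h1, mul_one, ← mul_one_sub, abs_mul]
        have h2 : |1 - bumpFun (-R - 1) (R + 1) y| ≤ 1 := by
          rw [abs_le]
          exact ⟨by linarith [bumpFun_le_one (-R - 1) (R + 1) y],
            by linarith [bumpFun_nonneg (-R - 1) (R + 1) y]⟩
        calc |Real.arctan y| * |1 - bumpFun (-R - 1) (R + 1) y| ≤ (Real.pi / 2) * 1 :=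
          mul_le_mul (arctan_abs_le y) h2 (abs_nonneg _) (by linarith)
        _ = Real.pi / 2 := mul_one _
    have hg₁z : g₁ z = Real.arctan z := by
      show Real.arctan z * bumpFun (-R - 1) (R + 1) z = Real.arctan z
      rw [bumpFun_eq_one (by linarith [hz.1]) (by linarith [hz.2]), mul_one]
    have hg₁est := H₁ t ht (lt_of_lt_of_le htδ (min_le_left _ _)) z
    rw [hg₁z] at hg₁est
    have hg₁int : (∫ y, g₁ y ∂(P t z)) = ∫ y, Real.arctan y * bumpFun (-R - 1) (R + 1) y ∂(P t z) := rfl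
    rw [hg₁int] at hg₁est
    have h5 : (Real.pi / 2) * mR (P t z) ((Icc (-R - 1) (R + 1))ᶜ) ≤ 2 * (ε / 8) := by
      have h6 : (Real.pi / 2) * mR (P t z) ((Icc (-R - 1) (R + 1))ᶜ) ≤
          2 * mR (P t z) ((Icc (-R - 1) (R + 1))ᶜ) :=
        mul_le_mul_of_nonneg_right (by linarith) (mR_nonneg _ _)
      linarith
    calc |F z - Real.arctan z| ≤
        |F z - ∫ y, Real.arctan y * bumpFun (-R - 1) (R + 1) y ∂(P t z)| +
        |(∫ y, Real.arctan y * bumpFun (-R - 1) (R + 1) y ∂(P t z)) - Real.arctan z| :=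
      abs_sub_le _ _ _
    _ ≤ ε / 2 := by linarith
  show |F x - Real.arctan x| ≤ ε
  by_cases hx1 : x ∈ Icc (-R) R
  · linarith [hinner x hx1, abs_nonneg (F x - Real.arctan x)]
  · rw [mem_Icc, not_and_or, not_le, not_le] at hx1
    rcases hx1 with hx1 | hx1
    · -- x < -R
      have hxa : Real.arctan x < -(Real.pi / 2) + ε / 4 := hR₂ x (by linarith)
      have hRa : Real.arctan (-R) < -(Real.pi / 2) + ε / 4 := hR₂ (-R) hRR₂
      have hFx : F x ≤ F (-R) := hFmono hx1.le
      have hFR := hinner (-R) ⟨le_refl _, by linarith⟩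
      have h1 := abs_le.1 hFR
      have h2 := Real.neg_pi_div_two_lt_arctan x
      refine abs_le.2 ⟨by linarith [hFge x], by linarith⟩
    · -- R < x
      have hxa : Real.pi / 2 - ε / 4 < Real.arctan x := hR₁ x (by linarith)
      have hRa : Real.pi / 2 - ε / 4 < Real.arctan R := hR₁ R hRR₁
      have hFx : F R ≤ F x := hFmono hx1.le
      have hFR := hinner R ⟨by linarith, le_refl _⟩
      have h1 := abs_le.1 hFR
      have h2 := Real.arctan_lt_pi_div_two x
      refine abs_le.2 ⟨by linarith, by linarith [hFle x]⟩

end Arctan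

section General

variable {P : ℝ → Kernel ℝ ℝ}

lemma coe_tendsto_top : Tendsto Real.toEReal atTop (𝓝 ⊤) := by
  rw [EReal.tendsto_nhds_top_iff_real]
  intro x
  filter_upwards [eventually_gt_atTop x] with a ha using EReal.coe_lt_coe_iff.2 ha

lemma coe_tendsto_bot : Tendsto Real.toEReal atBot (𝓝 ⊥) := by
  rw [EReal.tendsto_nhds_bot_iff_real]
  intro x
  filter_upwards [eventually_lt_atBot x] with a ha using EReal.coe_lt_coe_iff.2 ha

lemma fbound (f : C(EReal, ℝ)) : ∃ M : ℝ, 0 ≤ M ∧ ∀ z, |f z| ≤ M := by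
  refine ⟨‖BoundedContinuousFunction.mkOfCompact f‖, norm_nonneg _, fun z => ?_⟩
  simpa [Real.norm_eq_abs] using
    BoundedContinuousFunction.norm_coe_le_norm (BoundedContinuousFunction.mkOfCompact f) z

/-- decomposition of a continuous function on `ℝ̄` restricted to `ℝ` -/
lemma decomp (f : C(EReal, ℝ)) :
    ∃ g : C₀(ℝ, ℝ), ∀ x : ℝ,
      f ↑x = g x + (f ⊤ + f ⊥) / 2 + ((f ⊤ - f ⊥) / Real.pi) * Real.arctan x := by
  set c : ℝ := (f ⊤ + f ⊥) / 2 with hc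
  set d : ℝ := (f ⊤ - f ⊥) / Real.pi with hd
  have hπ : Real.pi ≠ 0 := Real.pi_ne_zero
  have hcont : Continuous (fun x : ℝ => f ↑x - c - d * Real.arctan x) := by
    refine ((f.continuous.comp continuous_coe_real_ereal).sub continuous_const).sub
      (continuous_const.mul Real.continuous_arctan)
  have htopf : Tendsto (fun x : ℝ => f ↑x) atTop (𝓝 (f ⊤)) :=
    (f.continuous.tendsto ⊤).comp coe_tendsto_top
  have hbotf : Tendsto (fun x : ℝ => f ↑x) atBot (𝓝 (f ⊥)) :=
    (f.continuous.tendsto ⊥).comp coe_tendsto_bot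
  have harct : Tendsto Real.arctan atTop (𝓝 (Real.pi / 2)) :=
    Real.tendsto_arctan_atTop.mono_right nhdsWithin_le_nhds
  have harcb : Tendsto Real.arctan atBot (𝓝 (-(Real.pi / 2))) :=
    Real.tendsto_arctan_atBot.mono_right nhdsWithin_le_nhds
  have hzt : Tendsto (fun x : ℝ => f ↑x - c - d * Real.arctan x) atTop (𝓝 0) := by
    have h1 : Tendsto (fun x : ℝ => f ↑x - c - d * Real.arctan x) atTop
        (𝓝 (f ⊤ - c - d * (Real.pi / 2))) :=
      ((htopf.sub_const c).sub (harct.const_mul d))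
    convert h1 using 2
    rw [hc, hd]
    field_simp
    ring
  have hzb : Tendsto (fun x : ℝ => f ↑x - c - d * Real.arctan x) atBot (𝓝 0) := by
    have h1 : Tendsto (fun x : ℝ => f ↑x - c - d * Real.arctan x) atBot
        (𝓝 (f ⊥ - c - d * (-(Real.pi / 2)))) :=
      ((hbotf.sub_const c).sub (harcb.const_mul d))
    convert h1 using 2
    rw [hc, hd]
    field_simp
    ring
  refine ⟨⟨⟨fun x => f ↑x - c - d * Real.arctan x, hcont⟩, ?_⟩, fun x => by
    show f ↑x = (f ↑x - c - d * Real.arctan x) + c + d * Real.arctan x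
    ring⟩
  show Tendsto _ (cocompact ℝ) (𝓝 0)
  rw [cocompact_eq_atBot_atTop, tendsto_sup]
  exact ⟨hzb, hzt⟩

/-- uniform small-time convergence for restrictions of continuous functions on `ℝ̄` -/
lemma unif_general (hMarkov : ∀ t, 0 ≤ t → IsMarkovKernel (P t))
    (hFellerB : ∀ f : C₀(ℝ, ℝ), ∀ ε > (0:ℝ), ∃ δ > (0:ℝ), ∀ t, 0 < t → t < δ →
      ∀ x : ℝ, |(∫ y, f y ∂(P t x)) - f x| ≤ ε)
    (hmono : ∀ t, 0 ≤ t → ∀ f : ℝ → ℝ, Measurable f → Monotone f →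
      (∃ M, ∀ x, |f x| ≤ M) → Monotone (fun x => ∫ y, f y ∂(P t x)))
    (f : C(EReal, ℝ)) {ε : ℝ} (hε : 0 < ε) :
    ∃ δ > (0:ℝ), ∀ t, 0 < t → t < δ → ∀ x : ℝ,
      |(∫ y, f ↑y ∂(P t x)) - f ↑x| ≤ ε := by
  obtain ⟨g, hg⟩ := decomp f
  set c : ℝ := (f ⊤ + f ⊥) / 2 with hc
  set d : ℝ := (f ⊤ - f ⊥) / Real.pi with hd
  obtain ⟨Mg, hMg0, hMg⟩ : ∃ M : ℝ, 0 ≤ M ∧ ∀ x, |g x| ≤ M := by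
    obtain ⟨M, hM0, hM⟩ := fbound f
    refine ⟨M + |c| + |d| * (Real.pi / 2), by positivity, fun x => ?_⟩
    have h1 : g x = f ↑x - c - d * Real.arctan x := by linarith [hg x]
    rw [h1]
    have h2 : |f ↑x - c - d * Real.arctan x| ≤ |f ↑x - c| + |d * Real.arctan x| :=
      abs_sub _ _
    have h3 : |f ↑x - c| ≤ |f ↑x| + |c| := abs_sub _ _
    have h4 : |d * Real.arctan x| = |d| * |Real.arctan x| := abs_mul _ _
    have h5 : |d| * |Real.arctan x| ≤ |d| * (Real.pi / 2) :=
      mul_le_mul_of_nonneg_left (arctan_abs_le x) (abs_nonneg d)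
    have h6 := hM (↑x : EReal)
    linarith
  obtain ⟨δ₁, hδ₁, H₁⟩ := hFellerB g (ε / 2) (by linarith)
  obtain ⟨δ₂, hδ₂, H₂⟩ := arctan_unif hMarkov hFellerB hmono
    (show (0:ℝ) < ε / (2 * (|d| + 1)) by positivity)
  refine ⟨min δ₁ δ₂, lt_min hδ₁ hδ₂, fun t ht htδ x => ?_⟩
  haveI := hMarkov t ht.le
  have harc_meas : Measurable Real.arctan := Real.continuous_arctan.measurable
  have hgint : Integrable (fun y : ℝ => g y) (P t x) := integ g.continuous.measurable hMg
  have harcint : Integrable Real.arctan (P t x) := integ harc_meas arctan_abs_le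
  have hint : (∫ y, f ↑y ∂(P t x)) =
      (∫ y, g y ∂(P t x)) + c + d * ∫ y, Real.arctan y ∂(P t x) := by
    have h0 : (fun y : ℝ => f ↑y) = fun y => g y + c + d * Real.arctan y := by
      funext y; exact hg y
    have e1 : ∫ y, (g y + c + d * Real.arctan y) ∂(P t x) =
        (∫ y, (g y + c) ∂(P t x)) + ∫ y, d * Real.arctan y ∂(P t x) :=
      integral_add (hgint.add (integrable_const c)) (harcint.const_mul d)
    have e2 : ∫ y, (g y + c) ∂(P t x) = (∫ y, g y ∂(P t x)) + ∫ _, c ∂(P t x) :=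
      integral_add hgint (integrable_const c)
    rw [h0, e1, e2, integral_const, MeasureTheory.integral_const_mul]
    simp
  have h1 := H₁ t ht (lt_of_lt_of_le htδ (min_le_left _ _)) x
  have h2 := H₂ t ht (lt_of_lt_of_le htδ (min_le_right _ _)) x
  have h3 : |d| * |(∫ y, Real.arctan y ∂(P t x)) - Real.arctan x| ≤ ε / 2 := by
    have h4 : |d| * |(∫ y, Real.arctan y ∂(P t x)) - Real.arctan x| ≤
        |d| * (ε / (2 * (|d| + 1))) := mul_le_mul_of_nonneg_left h2 (abs_nonneg d)
    have h5 : |d| * (ε / (2 * (|d| + 1))) ≤ (|d| + 1) * (ε / (2 * (|d| + 1))) := by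
      have : (0:ℝ) ≤ ε / (2 * (|d| + 1)) := by positivity
      nlinarith
    have h6 : (|d| + 1) * (ε / (2 * (|d| + 1))) = ε / 2 := by
      have : |d| + 1 ≠ 0 := by positivity
      field_simp
    linarith
  have hfx : f ↑x = g x + c + d * Real.arctan x := hg x
  rw [hint, hfx]
  have heq : (∫ y, g y ∂(P t x)) + c + d * (∫ y, Real.arctan y ∂(P t x)) -
      (g x + c + d * Real.arctan x) =
      ((∫ y, g y ∂(P t x)) - g x) + d * ((∫ y, Real.arctan y ∂(P t x)) - Real.arctan x) := by
    ring
  rw [heq]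
  calc |((∫ y, g y ∂(P t x)) - g x) + d * ((∫ y, Real.arctan y ∂(P t x)) - Real.arctan x)| ≤
      |(∫ y, g y ∂(P t x)) - g x| + |d * ((∫ y, Real.arctan y ∂(P t x)) - Real.arctan x)| :=
    abs_add_le _ _
  _ ≤ ε := by
    rw [abs_mul]
    linarith

end General

section Continuity

variable {P : ℝ → Kernel ℝ ℝ}

/-- continuity in the interior: `x ↦ ∫ u dP_t(x)` is continuous for bounded continuous `u` -/
lemma cont_integral (hMarkov : ∀ t, 0 ≤ t → IsMarkovKernel (P t))
    (hFellerA : ∀ t, 0 ≤ t → ∀ f : C₀(ℝ, ℝ),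
      Continuous (fun x => ∫ y, f y ∂(P t x)) ∧
      Tendsto (fun x => ∫ y, f y ∂(P t x)) (cocompact ℝ) (nhds 0))
    (hmono : ∀ t, 0 ≤ t → ∀ f : ℝ → ℝ, Measurable f → Monotone f →
      (∃ M, ∀ x, |f x| ≤ M) → Monotone (fun x => ∫ y, f y ∂(P t x)))
    {t : ℝ} (ht : 0 ≤ t) {u : ℝ → ℝ} {M : ℝ} (hu : Continuous u) (hM : ∀ x, |u x| ≤ M) :
    Continuous fun x : ℝ => ∫ y, u y ∂(P t x) := by
  have hM0 : 0 ≤ M := le_trans (abs_nonneg _) (hM 0)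
  haveI := hMarkov t ht
  rw [continuous_iff_continuousAt]
  intro x₀
  rw [Metric.continuousAt_iff]
  intro ε hε
  set ε' : ℝ := ε / (8 * (M + 1)) with hε'def
  have hε'pos : 0 < ε' := by positivity
  obtain ⟨K₁, hK₁⟩ := tail_Ioi (P t (x₀ + 1)) hε'pos
  obtain ⟨K₂, hK₂⟩ := tail_Iic (P t (x₀ - 1)) hε'pos
  set n : ℝ := max K₁ (-K₂) with hndef
  have htail : ∀ x : ℝ, |x - x₀| < 1 → mR (P t x) ((Icc (-n) n)ᶜ) ≤ 2 * ε' := by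
    intro x hx
    rw [abs_lt] at hx
    have hsub : (Icc (-n) n)ᶜ ⊆ Iic (-n) ∪ Ioi n := by
      intro y hy
      rw [mem_compl_iff, mem_Icc, not_and_or, not_le, not_le] at hy
      rcases hy with h | h
      · exact Or.inl h.le
      · exact Or.inr h
    have h1 : mR (P t x) (Iic (-n)) ≤ ε' := by
      refine le_trans (anti_Iic hMarkov hmono ht (-n) (by linarith : x₀ - 1 ≤ x)) ?_
      refine le_trans (mR_mono _ (Iic_subset_Iic.2 ?_)) hK₂
      have : -K₂ ≤ n := le_max_right _ _
      linarith
    have h2 : mR (P t x) (Ioi n) ≤ ε' := by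
      refine le_trans (mono_Ioi hMarkov hmono ht n (by linarith : x ≤ x₀ + 1)) ?_
      exact le_trans (mR_mono _ (Ioi_subset_Ioi (le_max_left _ _))) hK₁
    calc mR (P t x) ((Icc (-n) n)ᶜ) ≤ mR (P t x) (Iic (-n) ∪ Ioi n) := mR_mono _ hsub
    _ ≤ mR (P t x) (Iic (-n)) + mR (P t x) (Ioi n) := mR_union_le _ _ _
    _ ≤ 2 * ε' := by linarith
  set G : ℝ → ℝ := fun x => ∫ y, (cutMul u hu (-n) n) y ∂(P t x) with hGdef
  have hGcont : Continuous G := (hFellerA t ht (cutMul u hu (-n) n)).1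
  have hFG : ∀ x : ℝ, |x - x₀| < 1 → |(∫ y, u y ∂(P t x)) - G x| ≤ M * (2 * ε') := by
    intro x hx
    haveI := hMarkov t ht
    have hcb : ∀ y, |u y * bumpFun (-n) n y| ≤ M := by
      intro y
      rw [abs_mul]
      calc |u y| * |bumpFun (-n) n y| ≤ M * 1 :=
        mul_le_mul (hM y) (bumpFun_abs_le_one _ _ y) (abs_nonneg _) hM0
      _ = M := mul_one _
    have hd : |(∫ y, u y ∂(P t x)) - ∫ y, u y * bumpFun (-n) n y ∂(P t x)| ≤
        M * mR (P t x) ((Icc (-n) n)ᶜ) := by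
      refine abs_integral_diff_le hu.measurable (hu.mul (bumpFun_continuous _ _)).measurable
        hM (Mg := M) hcb measurableSet_Icc.compl hM0 ?_
      intro y
      by_cases hy : y ∈ Icc (-n) n
      · rw [Pi.mul_apply, bumpFun_eq_one hy.1 hy.2, mul_one, sub_self, abs_zero,
          indicator_of_notMem (by simpa using hy) _, mul_zero]
      · rw [Pi.mul_apply, indicator_of_mem (by simpa using hy) _, mul_one, ← mul_one_sub, abs_mul]
        have h2 : |1 - bumpFun (-n) n y| ≤ 1 := by
          rw [abs_le]
          exact ⟨by linarith [bumpFun_le_one (-n) n y], by linarith [bumpFun_nonneg (-n) n y]⟩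
        calc |u y| * |1 - bumpFun (-n) n y| ≤ M * 1 :=
          mul_le_mul (hM y) h2 (abs_nonneg _) hM0
        _ = M := mul_one _
    have hGx : G x = ∫ y, u y * bumpFun (-n) n y ∂(P t x) := rfl
    rw [hGx]
    exact hd.trans (mul_le_mul_of_nonneg_left (htail x hx) hM0)
  obtain ⟨δG, hδGpos, hδG⟩ := Metric.continuousAt_iff.1 hGcont.continuousAt (ε / 2)
    (half_pos hε)
  refine ⟨min δG 1, lt_min hδGpos one_pos, fun {x} hx => ?_⟩
  rw [Real.dist_eq] at hx ⊢
  have hx1 : |x - x₀| < 1 := lt_of_lt_of_le hx (min_le_right _ _)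
  have hxG : dist x x₀ < δG := by
    rw [Real.dist_eq]
    exact lt_of_lt_of_le hx (min_le_left _ _)
  have h1 := hFG x hx1
  have h2 := hFG x₀ (by simpa using one_pos)
  have h3 := hδG hxG
  rw [Real.dist_eq] at h3
  have h4 : M * (2 * ε') ≤ ε / 4 := by
    have hM1 : (0:ℝ) < M + 1 := by linarith
    have e : M * (2 * (ε / (8 * (M + 1)))) = (M * ε) / (4 * (M + 1)) := by
      field_simp
      ring
    rw [hε'def, e, div_le_div_iff₀ (by positivity) (by norm_num : (0:ℝ) < 4)]
    nlinarith [mul_nonneg hM0 hε.le]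
  have t1 : |(∫ y, u y ∂(P t x)) - ∫ y, u y ∂(P t x₀)| ≤
      |(∫ y, u y ∂(P t x)) - G x| + |G x - ∫ y, u y ∂(P t x₀)| := abs_sub_le _ _ _
  have t2 : |G x - ∫ y, u y ∂(P t x₀)| ≤
      |G x - G x₀| + |G x₀ - ∫ y, u y ∂(P t x₀)| := abs_sub_le _ _ _
  have t3 : |G x₀ - ∫ y, u y ∂(P t x₀)| = |(∫ y, u y ∂(P t x₀)) - G x₀| := abs_sub_comm _ _
  linarith

end Continuity



section Limits

variable {P : ℝ → Kernel ℝ ℝ}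

/-- behaviour at `+∞`: `∫ u dP_t(x) → A` as `x → +∞` when `u → A` at `+∞` -/
lemma tends_atTop (hMarkov : ∀ t, 0 ≤ t → IsMarkovKernel (P t))
    (hFellerA : ∀ t, 0 ≤ t → ∀ f : C₀(ℝ, ℝ),
      Continuous (fun x => ∫ y, f y ∂(P t x)) ∧
      Tendsto (fun x => ∫ y, f y ∂(P t x)) (cocompact ℝ) (nhds 0))
    (hmono : ∀ t, 0 ≤ t → ∀ f : ℝ → ℝ, Measurable f → Monotone f →
      (∃ M, ∀ x, |f x| ≤ M) → Monotone (fun x => ∫ y, f y ∂(P t x)))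
    {t : ℝ} (ht : 0 ≤ t) {u : ℝ → ℝ} {M A : ℝ} (hu : Continuous u) (hM : ∀ x, |u x| ≤ M)
    (hA : Tendsto u atTop (𝓝 A)) :
    Tendsto (fun x : ℝ => ∫ y, u y ∂(P t x)) atTop (𝓝 A) := by
  have hM0 : 0 ≤ M := le_trans (abs_nonneg _) (hM 0)
  haveI := hMarkov t ht
  rw [Metric.tendsto_atTop]
  intro ε hε
  set ε' : ℝ := ε / (2 * (4 * M + 1)) with hε'def
  have hε'pos : 0 < ε' := by positivity
  obtain ⟨K, hK⟩ := Metric.tendsto_atTop.1 hA ε' hε'pos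
  obtain ⟨K₀, hK₀⟩ := tail_Iic (P t 0) hε'pos
  set m : ℝ := min K K₀ with hmdef
  have hmK : m ≤ K := min_le_left _ _
  -- pointwise estimate
  have hpt : ∀ y : ℝ, |u y - A| ≤ ε' + 2 * M * (Iic K).indicator (fun _ => (1:ℝ)) y := by
    intro y
    by_cases hy : y ∈ Iic K
    · rw [indicator_of_mem hy]
      have h1 : |A| ≤ M := le_of_tendsto hA.abs (Eventually.of_forall hM)
      have h2 : |u y - A| ≤ |u y| + |A| := abs_sub _ _
      have h3 := hM y
      linarith
    · rw [indicator_of_notMem hy, mul_zero, add_zero]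
      rw [mem_Iic, not_le] at hy
      have := hK y (le_of_lt hy)
      rw [Real.dist_eq] at this
      exact this.le
  -- integral estimate for every x
  have hint : ∀ x : ℝ, |(∫ y, u y ∂(P t x)) - A| ≤ ε' + 2 * M * mR (P t x) (Iic K) := by
    intro x
    have e1 : (∫ y, u y ∂(P t x)) - A = ∫ y, (u y - A) ∂(P t x) := by
      rw [integral_sub (integ hu.measurable hM) (integrable_const A)]
      simp
    rw [e1]
    have e2 : |∫ y, (u y - A) ∂(P t x)| ≤ ∫ y, |u y - A| ∂(P t x) := by
      simpa [Real.norm_eq_abs] using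
        norm_integral_le_integral_norm (μ := P t x) (fun y => u y - A)
    have e3 : ∫ y, |u y - A| ∂(P t x) ≤
        ∫ y, (ε' + 2 * M * (Iic K).indicator (fun _ => (1:ℝ)) y) ∂(P t x) := by
      refine integral_mono ((integ hu.measurable hM).sub (integrable_const A)).abs ?_ hpt
      exact (integrable_const ε').add
        (((integ (M := 1) (measurable_const.indicator measurableSet_Iic) indicator_bound)).const_mul
          (2 * M))
    have e4 : ∫ y, (ε' + 2 * M * (Iic K).indicator (fun _ => (1:ℝ)) y) ∂(P t x) =
        ε' + 2 * M * mR (P t x) (Iic K) := by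
      rw [integral_add (integrable_const ε')
        (((integ (M := 1) (measurable_const.indicator measurableSet_Iic) indicator_bound)).const_mul
          (2 * M)), integral_const, MeasureTheory.integral_const_mul, int_indicator measurableSet_Iic]
      simp
    rw [← e4]
    exact le_trans e2 e3
  -- the tail of `P_t(x)` on `Iic K` is eventually small as `x → ∞`
  have htail : ∀ᶠ x in atTop, mR (P t x) (Iic K) ≤ 2 * ε' := by
    have hsub : Iic K ⊆ Iic m ∪ Icc m K := by
      intro y hy
      by_cases h : y ≤ m
      · exact Or.inl h
      · exact Or.inr ⟨le_of_not_ge h, hy⟩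
    have h2 : ∀ x : ℝ, 0 ≤ x → mR (P t x) (Iic m) ≤ ε' := by
      intro x hx
      refine le_trans (anti_Iic hMarkov hmono ht m hx) ?_
      exact le_trans (mR_mono _ (Iic_subset_Iic.2 (min_le_right _ _))) hK₀
    have h3 : Tendsto (fun x : ℝ => ∫ y, (bump m K) y ∂(P t x)) atTop (𝓝 0) := by
      refine ((hFellerA t ht (bump m K)).2).mono_left ?_
      rw [cocompact_eq_atBot_atTop]
      exact le_sup_right
    have h4 : ∀ᶠ x in atTop, |∫ y, (bump m K) y ∂(P t x)| < ε' := by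
      have := h3.eventually (Metric.ball_mem_nhds (0:ℝ) hε'pos)
      filter_upwards [this] with x hx
      simpa [Real.dist_eq] using hx
    have h5 : ∀ x : ℝ, mR (P t x) (Icc m K) ≤ ∫ y, (bump m K) y ∂(P t x) := by
      intro x
      rw [← int_indicator measurableSet_Icc]
      refine integral_mono (integ (M := 1) (measurable_const.indicator measurableSet_Icc)
        indicator_bound) (integ (M := 1) (bumpFun_continuous m K).measurable
        (bumpFun_abs_le_one m K)) ?_
      intro y
      by_cases hy : y ∈ Icc m K
      · rw [indicator_of_mem hy]
        exact (bumpFun_eq_one hy.1 hy.2).ge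
      · rw [indicator_of_notMem hy]
        exact bumpFun_nonneg m K y
    filter_upwards [h4, eventually_ge_atTop (0:ℝ)] with x hx4 hx0
    calc mR (P t x) (Iic K) ≤ mR (P t x) (Iic m ∪ Icc m K) := mR_mono _ hsub
    _ ≤ mR (P t x) (Iic m) + mR (P t x) (Icc m K) := mR_union_le _ _ _
    _ ≤ ε' + ε' := add_le_add (h2 x hx0) (le_trans (h5 x) (le_of_lt (lt_of_le_of_lt
        (le_abs_self _) hx4)))
    _ = 2 * ε' := by ring
  obtain ⟨N, hN⟩ := eventually_atTop.1 htail
  refine ⟨N, fun x hx => ?_⟩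
  rw [Real.dist_eq]
  have h6 := hint x
  have h7 := hN x hx
  have h8 : ε' + 2 * M * (2 * ε') = ε' * (4 * M + 1) := by ring
  have h9 : ε' * (4 * M + 1) = ε / 2 := by
    have hne : (4 * M + 1) ≠ 0 := by positivity
    rw [hε'def]
    field_simp
  have h10 : 2 * M * mR (P t x) (Iic K) ≤ 2 * M * (2 * ε') :=
    mul_le_mul_of_nonneg_left h7 (by linarith)
  calc |(∫ y, u y ∂(P t x)) - A| ≤ ε' + 2 * M * (2 * ε') := by linarith
  _ = ε / 2 := by rw [h8, h9]
  _ < ε := by linarith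

/-- behaviour at `-∞` -/
lemma tends_atBot (hMarkov : ∀ t, 0 ≤ t → IsMarkovKernel (P t))
    (hFellerA : ∀ t, 0 ≤ t → ∀ f : C₀(ℝ, ℝ),
      Continuous (fun x => ∫ y, f y ∂(P t x)) ∧
      Tendsto (fun x => ∫ y, f y ∂(P t x)) (cocompact ℝ) (nhds 0))
    (hmono : ∀ t, 0 ≤ t → ∀ f : ℝ → ℝ, Measurable f → Monotone f →
      (∃ M, ∀ x, |f x| ≤ M) → Monotone (fun x => ∫ y, f y ∂(P t x)))
    {t : ℝ} (ht : 0 ≤ t) {u : ℝ → ℝ} {M A : ℝ} (hu : Continuous u) (hM : ∀ x, |u x| ≤ M)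
    (hA : Tendsto u atBot (𝓝 A)) :
    Tendsto (fun x : ℝ => ∫ y, u y ∂(P t x)) atBot (𝓝 A) := by
  have hM0 : 0 ≤ M := le_trans (abs_nonneg _) (hM 0)
  haveI := hMarkov t ht
  rw [Metric.tendsto_nhds]
  intro ε hε
  set ε' : ℝ := ε / (2 * (4 * M + 1)) with hε'def
  have hε'pos : 0 < ε' := by positivity
  obtain ⟨K, hK⟩ := eventually_atBot.1 (hA.eventually (Metric.ball_mem_nhds A hε'pos))
  obtain ⟨K₀, hK₀⟩ := tail_Ioi (P t 0) hε'pos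
  set m : ℝ := max K K₀ with hmdef
  have hmK : K ≤ m := le_max_left _ _
  have hpt : ∀ y : ℝ, |u y - A| ≤ ε' + 2 * M * (Ioi K).indicator (fun _ => (1:ℝ)) y := by
    intro y
    by_cases hy : y ∈ Ioi K
    · rw [indicator_of_mem hy]
      have h1 : |A| ≤ M := le_of_tendsto hA.abs (Eventually.of_forall hM)
      have h2 : |u y - A| ≤ |u y| + |A| := abs_sub _ _
      have h3 := hM y
      linarith
    · rw [indicator_of_notMem hy, mul_zero, add_zero]
      rw [mem_Ioi, not_lt] at hy
      have h := hK y hy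
      simp only [Metric.mem_ball, Real.dist_eq] at h
      exact h.le
  have hint : ∀ x : ℝ, |(∫ y, u y ∂(P t x)) - A| ≤ ε' + 2 * M * mR (P t x) (Ioi K) := by
    intro x
    have e1 : (∫ y, u y ∂(P t x)) - A = ∫ y, (u y - A) ∂(P t x) := by
      rw [integral_sub (integ hu.measurable hM) (integrable_const A)]
      simp
    rw [e1]
    have e2 : |∫ y, (u y - A) ∂(P t x)| ≤ ∫ y, |u y - A| ∂(P t x) := by
      simpa [Real.norm_eq_abs] using
        norm_integral_le_integral_norm (μ := P t x) (fun y => u y - A)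
    have e3 : ∫ y, |u y - A| ∂(P t x) ≤
        ∫ y, (ε' + 2 * M * (Ioi K).indicator (fun _ => (1:ℝ)) y) ∂(P t x) := by
      refine integral_mono ((integ hu.measurable hM).sub (integrable_const A)).abs ?_ hpt
      exact (integrable_const ε').add
        (((integ (M := 1) (measurable_const.indicator measurableSet_Ioi) indicator_bound)).const_mul
          (2 * M))
    have e4 : ∫ y, (ε' + 2 * M * (Ioi K).indicator (fun _ => (1:ℝ)) y) ∂(P t x) =
        ε' + 2 * M * mR (P t x) (Ioi K) := by
      rw [integral_add (integrable_const ε')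
        (((integ (M := 1) (measurable_const.indicator measurableSet_Ioi) indicator_bound)).const_mul
          (2 * M)), integral_const, MeasureTheory.integral_const_mul, int_indicator measurableSet_Ioi]
      simp
    rw [← e4]
    exact le_trans e2 e3
  have htail : ∀ᶠ x in atBot, mR (P t x) (Ioi K) ≤ 2 * ε' := by
    have hsub : Ioi K ⊆ Icc K m ∪ Ioi m := by
      intro y hy
      by_cases h : y ≤ m
      · exact Or.inl ⟨le_of_lt hy, h⟩
      · exact Or.inr (lt_of_not_ge h)
    have h2 : ∀ x : ℝ, x ≤ 0 → mR (P t x) (Ioi m) ≤ ε' := by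
      intro x hx
      refine le_trans (mono_Ioi hMarkov hmono ht m hx) ?_
      exact le_trans (mR_mono _ (Ioi_subset_Ioi (le_max_right _ _))) hK₀
    have h3 : Tendsto (fun x : ℝ => ∫ y, (bump K m) y ∂(P t x)) atBot (𝓝 0) := by
      refine ((hFellerA t ht (bump K m)).2).mono_left ?_
      rw [cocompact_eq_atBot_atTop]
      exact le_sup_left
    have h4 : ∀ᶠ x in atBot, |∫ y, (bump K m) y ∂(P t x)| < ε' := by
      have := h3.eventually (Metric.ball_mem_nhds (0:ℝ) hε'pos)
      filter_upwards [this] with x hx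
      simpa [Real.dist_eq] using hx
    have h5 : ∀ x : ℝ, mR (P t x) (Icc K m) ≤ ∫ y, (bump K m) y ∂(P t x) := by
      intro x
      rw [← int_indicator measurableSet_Icc]
      refine integral_mono (integ (M := 1) (measurable_const.indicator measurableSet_Icc)
        indicator_bound) (integ (M := 1) (bumpFun_continuous K m).measurable
        (bumpFun_abs_le_one K m)) ?_
      intro y
      by_cases hy : y ∈ Icc K m
      · rw [indicator_of_mem hy]
        exact (bumpFun_eq_one hy.1 hy.2).ge
      · rw [indicator_of_notMem hy]
        exact bumpFun_nonneg K m y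
    filter_upwards [h4, eventually_le_atBot (0:ℝ)] with x hx4 hx0
    calc mR (P t x) (Ioi K) ≤ mR (P t x) (Icc K m ∪ Ioi m) := mR_mono _ hsub
    _ ≤ mR (P t x) (Icc K m) + mR (P t x) (Ioi m) := mR_union_le _ _ _
    _ ≤ ε' + ε' := add_le_add (le_trans (h5 x) (le_of_lt (lt_of_le_of_lt
        (le_abs_self _) hx4))) (h2 x hx0)
    _ = 2 * ε' := by ring
  filter_upwards [htail] with x h7
  rw [Real.dist_eq]
  have h6 := hint x
  have h8 : ε' + 2 * M * (2 * ε') = ε' * (4 * M + 1) := by ring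
  have h9 : ε' * (4 * M + 1) = ε / 2 := by
    have hne : (4 * M + 1) ≠ 0 := by positivity
    rw [hε'def]
    field_simp
  have h10 : 2 * M * mR (P t x) (Ioi K) ≤ 2 * M * (2 * ε') :=
    mul_le_mul_of_nonneg_left h7 (by linarith)
  calc |(∫ y, u y ∂(P t x)) - A| ≤ ε' + 2 * M * (2 * ε') := by linarith
  _ = ε / 2 := by rw [h8, h9]
  _ < ε := by linarith

end Limits

section KernelExt

/-- the extension of the kernel to `ℝ̄` -/
noncomputable def extK (P : ℝ → Kernel ℝ ℝ) (t : ℝ) : Kernel EReal EReal where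
  toFun := fun x =>
    if x = ⊥ then Measure.dirac ⊥ else if x = ⊤ then Measure.dirac ⊤
    else ((P t) x.toReal).map Real.toEReal
  measurable' := by
    refine Measurable.ite ?_ measurable_const ?_
    · simpa [Set.setOf_eq_eq_singleton] using MeasurableSet.singleton (⊥ : EReal)
    refine Measurable.ite ?_ measurable_const ?_
    · simpa [Set.setOf_eq_eq_singleton] using MeasurableSet.singleton (⊤ : EReal)
    exact (Measure.measurable_map _ measurable_coe_real_ereal).comp
      ((P t).measurable.comp measurable_ereal_toReal)

lemma extK_coe (P : ℝ → Kernel ℝ ℝ) (t : ℝ) (x : ℝ) :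
    extK P t ↑x = (P t x).map Real.toEReal := by
  show (if (↑x : EReal) = ⊥ then Measure.dirac ⊥ else if (↑x : EReal) = ⊤ then Measure.dirac ⊤
    else ((P t) (↑x : EReal).toReal).map Real.toEReal) = _
  rw [if_neg (EReal.coe_ne_bot x), if_neg (EReal.coe_ne_top x), EReal.toReal_coe]

lemma extK_bot (P : ℝ → Kernel ℝ ℝ) (t : ℝ) : extK P t ⊥ = Measure.dirac ⊥ := by
  show (if (⊥ : EReal) = ⊥ then Measure.dirac ⊥ else if (⊥ : EReal) = ⊤ then Measure.dirac ⊤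
    else ((P t) (⊥ : EReal).toReal).map Real.toEReal) = Measure.dirac ⊥
  rw [if_pos rfl]

lemma extK_top (P : ℝ → Kernel ℝ ℝ) (t : ℝ) : extK P t ⊤ = Measure.dirac ⊤ := by
  show (if (⊤ : EReal) = ⊥ then Measure.dirac ⊥ else if (⊤ : EReal) = ⊤ then Measure.dirac ⊤
    else ((P t) (⊤ : EReal).toReal).map Real.toEReal) = Measure.dirac ⊤
  rw [if_neg bot_lt_top.ne', if_pos rfl]

lemma extK_markov {P : ℝ → Kernel ℝ ℝ} (hMarkov : ∀ t, 0 ≤ t → IsMarkovKernel (P t))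
    {t : ℝ} (ht : 0 ≤ t) : IsMarkovKernel (extK P t) := by
  haveI := hMarkov t ht
  refine ⟨fun x => ?_⟩
  induction x using EReal.rec with
  | bot => rw [extK_bot]; infer_instance
  | coe r =>
      rw [extK_coe]
      exact Measure.isProbabilityMeasure_map measurable_coe_real_ereal.aemeasurable
  | top => rw [extK_top]; infer_instance

lemma bind_map_left {α β γ : Type*} [MeasurableSpace α] [MeasurableSpace β] [MeasurableSpace γ]
    (μ : Measure α) {g : α → β} (hg : Measurable g) {κ : β → Measure γ} (hκ : Measurable κ) :
    (μ.map g).bind κ = μ.bind (fun a => κ (g a)) := by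
  ext s hs
  rw [Measure.bind_apply hs hκ.aemeasurable,
    Measure.bind_apply hs (show Measurable fun a => κ (g a) from hκ.comp hg).aemeasurable,
    lintegral_map (show Measurable fun b => κ b s from (Measure.measurable_coe hs).comp hκ) hg]

lemma map_bind_right {α β γ : Type*} [MeasurableSpace α] [MeasurableSpace β] [MeasurableSpace γ]
    (μ : Measure α) {κ : α → Measure β} (hκ : Measurable κ) {g : β → γ} (hg : Measurable g) :
    (μ.bind κ).map g = μ.bind (fun a => (κ a).map g) := by
  ext s hs
  rw [Measure.map_apply hg hs, Measure.bind_apply (hg hs) hκ.aemeasurable,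
    Measure.bind_apply hs
      (show Measurable fun a => (κ a).map g from (Measure.measurable_map _ hg).comp hκ).aemeasurable]
  exact lintegral_congr fun a => (Measure.map_apply hg hs).symm

lemma int_extK_coe {P : ℝ → Kernel ℝ ℝ} (t : ℝ) (x : ℝ) (f : C(EReal, ℝ)) :
    ∫ y, f y ∂(extK P t ↑x) = ∫ y, f ↑y ∂(P t x) := by
  rw [extK_coe, integral_map measurable_coe_real_ereal.aemeasurable
    f.continuous.aestronglyMeasurable]

end KernelExt

end Stmt14Aux

open Stmt14Aux in
/-- If `(P_t)` is a stochastically monotone Feller Markov semigroup on `ℝ`, then its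
extension `(P̃_t)` to the extended real line `ℝ̄` — given by `P̃_t(x,·)` the extension of
`P_t(x,·)` for `x ∈ ℝ` and `P̃_t(±∞,·) = δ_{±∞}` — is a Feller semigroup on the compact
space `ℝ̄`: it maps `C(ℝ̄)` to `C(ℝ̄)` and `P̃_t f → f` uniformly as `t → 0+`. -/
theorem stmt14 (P : ℝ → Kernel ℝ ℝ)
    (hMarkov : ∀ t, 0 ≤ t → IsMarkovKernel (P t))
    (hP0 : P 0 = Kernel.id)
    (hsemi : ∀ s t, 0 ≤ s → 0 ≤ t → P (s + t) = (P t) ∘ₖ (P s))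
    (hFellerA : ∀ t, 0 ≤ t → ∀ f : C₀(ℝ, ℝ),
      Continuous (fun x => ∫ y, f y ∂(P t x)) ∧
      Tendsto (fun x => ∫ y, f y ∂(P t x)) (cocompact ℝ) (nhds 0))
    (hFellerB : ∀ f : C₀(ℝ, ℝ), ∀ ε > (0:ℝ), ∃ δ > (0:ℝ), ∀ t, 0 < t → t < δ →
      ∀ x : ℝ, |(∫ y, f y ∂(P t x)) - f x| ≤ ε)
    (hmono : ∀ t, 0 ≤ t → ∀ f : ℝ → ℝ, Measurable f → Monotone f →
      (∃ M, ∀ x, |f x| ≤ M) → Monotone (fun x => ∫ y, f y ∂(P t x))) :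
    ∃ Q : ℝ → Kernel EReal EReal,
      (∀ t, 0 ≤ t → IsMarkovKernel (Q t)) ∧
      -- `Q t` is the extension of `P t` to `ℝ̄`:
      (∀ t, 0 ≤ t → ∀ x : ℝ, Q t (x : EReal) = (P t x).map Real.toEReal) ∧
      (∀ t, 0 ≤ t → Q t ⊥ = Measure.dirac ⊥ ∧ Q t ⊤ = Measure.dirac ⊤) ∧
      -- semigroup property:
      (Q 0 = Kernel.id) ∧
      (∀ s t, 0 ≤ s → 0 ≤ t → Q (s + t) = (Q t) ∘ₖ (Q s)) ∧
      -- Feller property on the compact space `ℝ̄`: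
      (∀ t, 0 ≤ t → ∀ f : C(EReal, ℝ), Continuous (fun x => ∫ y, f y ∂(Q t x))) ∧
      (∀ f : C(EReal, ℝ), ∀ ε > (0:ℝ), ∃ δ > (0:ℝ), ∀ t, 0 < t → t < δ →
        ∀ x : EReal, |(∫ y, f y ∂(Q t x)) - f x| ≤ ε) := by
  refine ⟨extK P, fun t ht => extK_markov hMarkov ht, fun t ht x => extK_coe P t x,
    fun t ht => ⟨extK_bot P t, extK_top P t⟩, ?_, ?_, ?_, ?_⟩
  · -- Q 0 = id
    refine Kernel.ext fun a => ?_
    rw [Kernel.id_apply]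
    induction a using EReal.rec with
    | bot => exact extK_bot P 0
    | top => exact extK_top P 0
    | coe r =>
        rw [extK_coe, hP0, Kernel.id_apply, Measure.map_dirac' measurable_coe_real_ereal]
  · -- semigroup
    intro s t hs ht
    refine Kernel.ext fun a => ?_
    rw [Kernel.comp_apply]
    induction a using EReal.rec with
    | bot =>
        rw [extK_bot, extK_bot, Measure.dirac_bind (extK P t).measurable, extK_bot]
    | top =>
        rw [extK_top, extK_top, Measure.dirac_bind (extK P t).measurable, extK_top]
    | coe x =>
        rw [extK_coe, extK_coe,
          bind_map_left _ measurable_coe_real_ereal (extK P t).measurable]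
        have h1 : (fun r : ℝ => extK P t ↑r) = fun r : ℝ => (P t r).map Real.toEReal :=
          funext fun r => extK_coe P t r
        rw [h1, ← map_bind_right _ (P t).measurable measurable_coe_real_ereal,
          ← Kernel.comp_apply, ← hsemi s t hs ht]
  · -- continuity
    intro t ht f
    obtain ⟨M, hM0, hM⟩ := fbound f
    have hucont : Continuous (fun r : ℝ => f ↑r) := f.continuous.comp continuous_coe_real_ereal
    have hubd : ∀ r : ℝ, |f ↑r| ≤ M := fun r => hM ↑r
    have hcomp : (fun x : EReal => ∫ y, f y ∂(extK P t x)) ∘ Real.toEReal =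
        fun r : ℝ => ∫ y, f ↑y ∂(P t r) := funext fun r => int_extK_coe t r f
    rw [continuous_iff_continuousAt]
    intro x
    induction x using EReal.rec with
    | coe r =>
        show Tendsto _ (𝓝 (↑r : EReal)) _
        rw [← EReal.isOpenEmbedding_coe.map_nhds_eq r, tendsto_map'_iff, hcomp]
        show Tendsto _ (𝓝 r) (𝓝 (∫ y, f y ∂(extK P t ↑r)))
        rw [int_extK_coe]
        exact (cont_integral hMarkov hFellerA hmono ht hucont hubd).continuousAt
    | top =>
        have hval : (∫ y, f y ∂(extK P t ⊤)) = f ⊤ := by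
          rw [extK_top]
          exact integral_dirac _ _
        show Tendsto (fun x : EReal => ∫ y, f y ∂(extK P t x)) (𝓝 (⊤ : EReal))
          (𝓝 (∫ y, f y ∂(extK P t ⊤)))
        rw [hval, ← nhdsNE_sup_pure (⊤ : EReal), tendsto_sup]
        constructor
        · rw [EReal.nhdsWithin_top, tendsto_map'_iff, hcomp]
          exact tends_atTop hMarkov hFellerA hmono ht hucont hubd
            ((f.continuous.tendsto ⊤).comp coe_tendsto_top)
        · have h := tendsto_pure_nhds (fun x : EReal => ∫ y, f y ∂(extK P t x)) ⊤
          simp only [hval] at h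
          exact h
    | bot =>
        have hval : (∫ y, f y ∂(extK P t ⊥)) = f ⊥ := by
          rw [extK_bot]
          exact integral_dirac _ _
        show Tendsto (fun x : EReal => ∫ y, f y ∂(extK P t x)) (𝓝 (⊥ : EReal))
          (𝓝 (∫ y, f y ∂(extK P t ⊥)))
        rw [hval, ← nhdsNE_sup_pure (⊥ : EReal), tendsto_sup]
        constructor
        · rw [EReal.nhdsWithin_bot, tendsto_map'_iff, hcomp]
          exact tends_atBot hMarkov hFellerA hmono ht hucont hubd
            ((f.continuous.tendsto ⊥).comp coe_tendsto_bot)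
        · have h := tendsto_pure_nhds (fun x : EReal => ∫ y, f y ∂(extK P t x)) ⊥
          simp only [hval] at h
          exact h
  · -- uniform convergence as t → 0+
    intro f ε hε
    obtain ⟨δ, hδ, H⟩ := unif_general hMarkov hFellerB hmono f hε
    refine ⟨δ, hδ, fun t ht htδ x => ?_⟩
    induction x using EReal.rec with
    | coe r =>
        rw [int_extK_coe]
        exact H t ht htδ r
    | top =>
        rw [extK_top, integral_dirac, sub_self, abs_zero]
        exact hε.le
    | bot =>
        rw [extK_bot, integral_dirac, sub_self, abs_zero]
        exact hε.le
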